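/- For any nondecreasing sequence of memory locations e_1 ≤ e_2 ≤ ... ≤ e_n and any block size B ≥ 1, the expected smoothed cache-oblivious cost, defined as the average over shifts s ∈ [0,B) of the number of indices i ≥ 2 with ⌊(e_i+s)/B⌋ ≠ ⌊(e_{i-1}+s)/B⌋, equals the sum over i ≥ 2 of min(1, (e_i - e_{i-1})/B). -/
import Mathlib


open Finset

lemma sum_add_div (B : ℕ) (hB : 1 ≤ B) : ∀ x : ℕ, ∑ s ∈ Finset.range B, (x + s) / B = x := by
  intro x
  induction x with
  | zero =>
    apply Finset.sum_eq_zero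
    intro s hs
    simp only [Finset.mem_range] at hs
    simpa using Nat.div_eq_of_lt hs
  | succ x ih =>
    have h1 : ∑ s ∈ Finset.range B, (x + 1 + s) / B = ∑ s ∈ Finset.range B, (x + (s + 1)) / B := by
      apply Finset.sum_congr rfl
      intro s _
      ring_nf
    have h2 : (∑ s ∈ Finset.range B, (x + (s + 1)) / B) + (x + 0) / B
        = (∑ s ∈ Finset.range B, (x + s) / B) + (x + B) / B := by
      rw [← Finset.sum_range_succ' (fun s => (x + s) / B) B, Finset.sum_range_succ]
    have h3 : (x + B) / B = x / B + 1 := by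
      rw [Nat.add_div_right _ (by omega)]
    have h4 : x / B ≤ x := Nat.div_le_self x B
    simp only [Nat.add_zero] at h2
    rw [ih] at h2
    rw [h1]
    omega

lemma count_key (B a d : ℕ) (hB : 1 ≤ B) :
    ∑ s ∈ Finset.range B, (if (a + d + s) / B ≠ (a + s) / B then 1 else 0 : ℕ) = min B d := by
  rcases le_or_gt B d with hd | hd
  · have : ∀ s ∈ Finset.range B,
        (if (a + d + s) / B ≠ (a + s) / B then 1 else 0 : ℕ) = 1 := by
      intro s _
      have h1 : (a + s + B) / B ≤ (a + d + s) / B := by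
        apply Nat.div_le_div_right; omega
      rw [Nat.add_div_right _ (by omega)] at h1
      rw [if_pos (by omega)]
    rw [Finset.sum_congr rfl this]
    simp [min_eq_left hd]
  · -- d < B : indicator = diff of divs
    have hle : ∀ s, (a + s) / B ≤ (a + d + s) / B := fun s =>
      Nat.div_le_div_right (by omega)
    have hub : ∀ s, (a + d + s) / B ≤ (a + s) / B + 1 := by
      intro s
      have : (a + d + s) / B ≤ (a + s + B) / B := Nat.div_le_div_right (by omega)
      rwa [Nat.add_div_right _ (by omega)] at this
    have heq : ∀ s ∈ Finset.range B,
        (if (a + d + s) / B ≠ (a + s) / B then 1 else 0 : ℕ)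
          = (a + d + s) / B - (a + s) / B := by
      intro s _
      have h1 := hle s
      have h2 := hub s
      by_cases h : (a + d + s) / B = (a + s) / B
      · rw [if_neg (by simp [h])]; omega
      · rw [if_pos h]; omega
    rw [Finset.sum_congr rfl heq]
    have hsplit : (∑ s ∈ Finset.range B, (a + s) / B)
        + (∑ s ∈ Finset.range B, ((a + d + s) / B - (a + s) / B))
        = ∑ s ∈ Finset.range B, (a + d + s) / B := by
      rw [← Finset.sum_add_distrib]
      apply Finset.sum_congr rfl
      intro s _
      have := hle s
      omega
    rw [sum_add_div B hB a, sum_add_div B hB (a + d)] at hsplit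
    omega

theorem smoothed_CO_eq_LoR (n B : ℕ) (hB : 1 ≤ B) (e : ℕ → ℕ) (he : Monotone e) :
    (1 / (B : ℝ)) *
      ∑ s ∈ Finset.range B, ∑ i ∈ Finset.range (n - 1),
        (if (e (i + 1) + s) / B ≠ (e i + s) / B then (1 : ℝ) else 0)
    = ∑ i ∈ Finset.range (n - 1), min 1 (((e (i + 1) - e i : ℕ) : ℝ) / B) := by
  have hB' : (0 : ℝ) < B := by exact_mod_cast hB
  rw [Finset.sum_comm, Finset.mul_sum]
  apply Finset.sum_congr rfl
  intro i _
  set d := e (i + 1) - e i with hd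
  have hei : e (i + 1) = e i + d := by
    have : e i ≤ e (i + 1) := he (by omega)
    omega
  have hcast : ∑ s ∈ Finset.range B,
      (if (e (i + 1) + s) / B ≠ (e i + s) / B then (1 : ℝ) else 0)
      = ((∑ s ∈ Finset.range B,
          (if (e i + d + s) / B ≠ (e i + s) / B then 1 else 0 : ℕ) : ℕ) : ℝ) := by
    push_cast
    apply Finset.sum_congr rfl
    intro s _
    rw [hei]
  rw [hcast, count_key B (e i) d hB]
  rcases le_total B d with h | h
  · rw [min_eq_left h, min_eq_left (by
      rw [le_div_iff₀ hB']
      rw [one_mul]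
      exact_mod_cast h)]
    field_simp
  · rw [min_eq_right h, min_eq_right (by rw [div_le_one hB']; exact_mod_cast h)]
    field_simp
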